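/- For every (parametric) timed automaton A with clock set X of size n there exists an equivalent (parametric) non-resetting-test timed automaton A' with 2n clocks, i.e., the n clocks of a TA can be simulated by 2n nrtTA clocks: for every parameter interpretation and every timed ω-word, A' has an accepting run over that word if and only if A does. -/

import Mathlib

/-- Clock constraints over a set of clocks `X`, possibly mentioning one parameter `μ`:
`γ ::= z < c | z = c | z < μ | z = μ | ¬γ | γ ∧ γ`. -/
inductive ClockConstraint (X : Type) : Type where
  | ltC : X → ℕ → ClockConstraint X
  | eqC : X → ℕ → ClockConstraint X
  | ltP : X → ClockConstraint X
  | eqP : X → ClockConstraint X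
  | neg : ClockConstraint X → ClockConstraint X
  | conj : ClockConstraint X → ClockConstraint X → ClockConstraint X

namespace ClockConstraint

/-- Satisfaction of a clock constraint by a clock valuation `v`, under parameter value `μ`. -/
def sat {X : Type} (v : X → ℝ) (μ : ℝ) : ClockConstraint X → Prop
  | ltC z c => v z < (c : ℝ)
  | eqC z c => v z = (c : ℝ)
  | ltP z => v z < μ
  | eqP z => v z = μ
  | neg γ => ¬ sat v μ γ
  | conj γ₁ γ₂ => sat v μ γ₁ ∧ sat v μ γ₂

/-- The set of clocks occurring in a clock constraint. -/
def clocks {X : Type} : ClockConstraint X → Set X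
  | ltC z _ => {z}
  | eqC z _ => {z}
  | ltP z => {z}
  | eqP z => {z}
  | neg γ => clocks γ
  | conj γ₁ γ₂ => clocks γ₁ ∪ clocks γ₂

/-- Maximum constant appearing in a clock constraint. -/
def maxConst {X : Type} : ClockConstraint X → ℕ
  | ltC _ c => c
  | eqC _ c => c
  | ltP _ => 0
  | eqP _ => 0
  | neg γ => maxConst γ
  | conj γ₁ γ₂ => max (maxConst γ₁) (maxConst γ₂)

/-- Does the parameter occur in a constraint? -/
def hasParam {X : Type} : ClockConstraint X → Prop
  | ltP _ => True
  | eqP _ => True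
  | neg γ => hasParam γ
  | conj γ₁ γ₂ => hasParam γ₁ ∨ hasParam γ₂
  | _ => False

/-- Does a constant occur in a constraint? -/
def hasConst {X : Type} : ClockConstraint X → Prop
  | ltC _ _ => True
  | eqC _ _ => True
  | neg γ => hasConst γ
  | conj γ₁ γ₂ => hasConst γ₁ ∨ hasConst γ₂
  | _ => False

end ClockConstraint

/-- A (parametric) timed automaton with states `Q`, alphabet `A`, clocks `X`:
initial state, Büchi acceptance set, and transitions `q --(γ, a, S)--> q'`. -/
structure PTA (Q A X : Type) where
  init : Q
  acc : Set Q
  trans : Set (Q × ClockConstraint X × A × Set X × Q)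

/-- A (parametric) TA is a non-resetting-test TA if on every transition the clocks
tested in the guard are disjoint from the reset set. -/
def PTA.IsNrt {Q A X : Type} (M : PTA Q A X) : Prop :=
  ∀ t ∈ M.trans, t.2.1.clocks ∩ t.2.2.2.1 = ∅

/-- `q, v` is a (parametric) run of `M` over the timed ω-word `(π, τ)` under parameter
value `μ`.  Positions of the word are `1, 2, …`; conventionally `τ 0 = 0`. -/
def IsParamRun {Q A X : Type} (M : PTA Q A X) (μ : ℝ) (π : ℕ → A) (τ : ℕ → ℝ)
    (q : ℕ → Q) (v : ℕ → X → ℝ) : Prop :=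
  τ 0 = 0 ∧ (∀ i, 0 ≤ τ i) ∧ (∀ i, 1 ≤ i → τ i < τ (i + 1)) ∧
  q 0 = M.init ∧ (∀ z, v 0 z = 0) ∧
  ∀ i : ℕ, ∃ γ S, (q i, γ, π (i + 1), S, q (i + 1)) ∈ M.trans ∧
    ClockConstraint.sat (fun z => v i z + (τ (i + 1) - τ i)) μ γ ∧
    ∀ z, (z ∈ S → v (i + 1) z = 0) ∧
         (z ∉ S → v (i + 1) z = v i z + (τ (i + 1) - τ i))

/-- `M` has an accepting (parametric) run over the timed ω-word `(π, τ)` under `μ`: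
some accepting state occurs infinitely often along a run. -/
def AcceptsWord {Q A X : Type} (M : PTA Q A X) (μ : ℝ) (π : ℕ → A) (τ : ℕ → ℝ) : Prop :=
  ∃ q v, IsParamRun M μ π τ q v ∧ ∃ qf ∈ M.acc, ∀ n : ℕ, ∃ m, n ≤ m ∧ q m = qf

section NRTaux

open ClockConstraint

attribute [local instance] Classical.propDecidable

/-- Rename the clocks of a constraint. -/
def cmap {X Y : Type} (f : X → Y) : ClockConstraint X → ClockConstraint Y
  | .ltC z c => .ltC (f z) c
  | .eqC z c => .eqC (f z) c
  | .ltP z => .ltP (f z)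
  | .eqP z => .eqP (f z)
  | .neg γ => .neg (cmap f γ)
  | .conj γ₁ γ₂ => .conj (cmap f γ₁) (cmap f γ₂)

lemma sat_cmap {X Y : Type} (f : X → Y) (v : Y → ℝ) (μ : ℝ) (γ : ClockConstraint X) :
    sat v μ (cmap f γ) ↔ sat (fun z => v (f z)) μ γ := by
  induction γ <;> simp [cmap, sat, *]

lemma clocks_cmap {X Y : Type} (f : X → Y) (γ : ClockConstraint X) :
    (cmap f γ).clocks = f '' γ.clocks := by
  induction γ <;> simp [cmap, clocks, Set.image_union, *]

/-- The copy of clock `z` selected by the bit `t`. -/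
def copy {X : Type} (t : Bool) (z : X) : X ⊕ X := if t then .inl z else .inr z

lemma copy_eq_copy {X : Type} {t t' : Bool} {z z' : X} :
    copy t z = copy t' z' ↔ t = t' ∧ z = z' := by
  cases t <;> cases t' <;> simp [copy]

/-- The inactive copies of the clocks in `S`. -/
def resetSet {X : Type} (b : X → Bool) (S : Set X) : Set (X ⊕ X) :=
  {c | ∃ z ∈ S, c = copy (!(b z)) z}

lemma copy_mem_resetSet {X : Type} {b : X → Bool} {S : Set X} {t : Bool} {z : X} :
    copy t z ∈ resetSet b S ↔ z ∈ S ∧ t = !(b z) := by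
  constructor
  · rintro ⟨z', hz', h⟩
    obtain ⟨ht, hz⟩ := copy_eq_copy.1 h
    subst hz; exact ⟨hz', ht⟩
  · rintro ⟨hz, ht⟩; exact ⟨z, hz, copy_eq_copy.2 ⟨ht, rfl⟩⟩

/-- Flip the bits of the clocks in `S`. -/
noncomputable def flipb {X : Type} (b : X → Bool) (S : Set X) : X → Bool :=
  fun z => if z ∈ S then !(b z) else b z

/-- Bit sequence along a run with reset sets `Ss`. -/
noncomputable def bseq {X : Type} (Ss : ℕ → Set X) : ℕ → X → Bool
  | 0 => fun _ => true
  | i + 1 => flipb (bseq Ss i) (Ss i)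

/-- Clock valuation sequence of the simulating automaton. -/
noncomputable def vseq {X : Type} (Ss : ℕ → Set X) (τ : ℕ → ℝ) : ℕ → (X ⊕ X) → ℝ
  | 0 => fun _ => 0
  | i + 1 => fun c =>
      if c ∈ resetSet (bseq Ss i) (Ss i) then 0
      else vseq Ss τ i c + (τ (i + 1) - τ i)

end NRTaux

/-- For every (parametric) TA `M` with clock set `X` of size `n` there is an equivalent
(parametric) non-resetting-test TA with `2n` clocks (clock set `X ⊕ X`): for every
parameter interpretation and every timed ω-word, the new automaton has an accepting
parametric run over that word iff `M` does. -/
theorem exists_equivalent_nrtTA_double_clocks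
    {Q A X : Type} [Finite Q] [Finite A] [Finite X]
    (M : PTA Q A X) (hfin : M.trans.Finite) :
    ∃ (Q' : Type) (_ : Finite Q') (M' : PTA Q' A (X ⊕ X)),
      M'.trans.Finite ∧ M'.IsNrt ∧
      ∀ (μ : ℝ) (π : ℕ → A) (τ : ℕ → ℝ),
        AcceptsWord M' μ π τ ↔ AcceptsWord M μ π τ := by
  classical
  -- the simulating automaton: states carry a bit per clock telling which copy is active
  refine ⟨Q × (X → Bool), inferInstance,
    { init := (M.init, fun _ => true)
      acc := {p | p.1 ∈ M.acc}
      trans := (fun p : (Q × ClockConstraint X × A × Set X × Q) × (X → Bool) =>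
          ((p.1.1, p.2), cmap (fun z => copy (p.2 z) z) p.1.2.1, p.1.2.2.1,
            resetSet p.2 p.1.2.2.2.1, (p.1.2.2.2.2, flipb p.2 p.1.2.2.2.1)))
        '' (M.trans ×ˢ (Set.univ : Set (X → Bool))) }, ?fin, ?nrt, ?equiv⟩
  case fin => exact (hfin.prod Set.finite_univ).image _
  case nrt =>
    rintro t ⟨⟨⟨q₀, γ, a, S, q₁⟩, b⟩, -, rfl⟩
    ext c
    simp only [Set.mem_inter_iff, Set.mem_empty_iff_false, iff_false, not_and]
    rintro hc hc'
    rw [clocks_cmap] at hc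
    obtain ⟨z, -, rfl⟩ := hc
    obtain ⟨-, ht⟩ := copy_mem_resetSet.1 hc'
    simp at ht
  case equiv =>
    intro μ π τ
    constructor
    · -- backward: a run of the nrt automaton yields a run of M
      rintro ⟨q', v', ⟨h1, h2, h3, h4, h5, h6⟩, qf', hqf'acc, hqf'⟩
      refine ⟨fun i => (q' i).1, fun i z => v' i (copy ((q' i).2 z) z),
        ⟨h1, h2, h3, show (q' 0).1 = M.init by rw [h4], fun z => h5 _, ?_⟩, qf'.1, hqf'acc, ?_⟩
      · intro i
        obtain ⟨γ', S', hmem, hsat, hres⟩ := h6 i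
        obtain ⟨⟨⟨q₀, γ, a, S, q₁⟩, b⟩, ⟨htr, -⟩, heq⟩ := hmem
        obtain ⟨hq, hγ, ha, hS, hq'⟩ :
            ((q₀, b) = q' i) ∧ (cmap (fun z => copy (b z) z) γ = γ') ∧ (a = π (i+1)) ∧
            (resetSet b S = S') ∧ ((q₁, flipb b S) = q' (i+1)) := by
          simpa [Prod.ext_iff] using heq
        have hb : (q' i).2 = b := by rw [← hq]
        have hb' : (q' (i+1)).2 = flipb b S := by rw [← hq']
        refine ⟨γ, S, ?_, ?_, ?_⟩
        · have : (q' i).1 = q₀ := by rw [← hq]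
          have h2' : (q' (i+1)).1 = q₁ := by rw [← hq']
          show ((q' i).1, γ, π (i+1), S, (q' (i+1)).1) ∈ M.trans
          rw [this, h2', ← ha]; exact htr
        · subst hγ
          have := (sat_cmap (fun z => copy (b z) z)
            (fun c => v' i c + (τ (i+1) - τ i)) μ γ).1 hsat
          simpa [hb] using this
        · intro z
          constructor
          · intro hz
            show v' (i+1) (copy ((q' (i+1)).2 z) z) = 0
            rw [hb']
            simp only [flipb, if_pos hz]
            exact (hres _).1 (by rw [← hS]; exact copy_mem_resetSet.2 ⟨hz, rfl⟩)
          · intro hz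
            show v' (i+1) (copy ((q' (i+1)).2 z) z)
              = v' i (copy ((q' i).2 z) z) + (τ (i+1) - τ i)
            rw [hb', hb]
            simp only [flipb, if_neg hz]
            refine (hres _).2 ?_
            rw [← hS]
            exact fun hc => hz (copy_mem_resetSet.1 hc).1
      · intro n
        obtain ⟨m, hm, hq⟩ := hqf' n
        exact ⟨m, hm, show (q' m).1 = qf'.1 by rw [hq]⟩
    · -- forward: a run of M is simulated by the nrt automaton
      rintro ⟨q, v, ⟨h1, h2, h3, h4, h5, h6⟩, qf, hacc, hqf⟩
      choose γs Ss hmem hsat hres using h6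
      set b := bseq Ss with hbdef
      set v' := vseq Ss τ with hvdef
      -- key invariant: the active copy carries the value of the original clock
      have key : ∀ i z, v' i (copy (b i z) z) = v i z := by
        intro i
        induction i with
        | zero => intro z; simpa [hvdef, vseq] using (h5 z).symm
        | succ i ih =>
          intro z
          by_cases hz : z ∈ Ss i
          · have hb1 : b (i+1) z = !(b i z) := by simp [hbdef, bseq, flipb, hz]
            rw [hb1]
            have : copy (!(b i z)) z ∈ resetSet (b i) (Ss i) :=
              copy_mem_resetSet.2 ⟨hz, rfl⟩
            rw [hvdef]
            simp only [vseq, ← hbdef, this, if_pos]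
            exact (((hres i) z).1 hz).symm
          · have hb1 : b (i+1) z = b i z := by simp [hbdef, bseq, flipb, hz]
            have hnot : copy (b i z) z ∉ resetSet (b i) (Ss i) := by
              intro hc; exact hz (copy_mem_resetSet.1 hc).1
            rw [hb1, hvdef]
            simp only [vseq, ← hbdef, hnot, if_neg, not_false_iff]
            rw [← hvdef, ih z, (((hres i) z).2 hz)]
      refine ⟨fun i => (q i, b i), v', ⟨h1, h2, h3, by simp [h4, hbdef, bseq], ?_, ?_⟩, ?_⟩
      · intro c; simp [hvdef, vseq]
      · intro i
        refine ⟨cmap (fun z => copy (b i z) z) (γs i), resetSet (b i) (Ss i), ?_, ?_, ?_⟩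
        · refine ⟨((q i, γs i, π (i+1), Ss i, q (i+1)), b i), ⟨hmem i, trivial⟩, ?_⟩
          have : b (i+1) = flipb (b i) (Ss i) := by simp [hbdef, bseq]
          simp [this]
        · rw [sat_cmap]
          have : (fun z => v' i (copy (b i z) z) + (τ (i+1) - τ i))
              = fun z => v i z + (τ (i+1) - τ i) := by
            funext z; rw [key i z]
          simpa [this] using hsat i
        · intro c
          constructor
          · intro hc; rw [hvdef]; simp only [vseq, ← hbdef, hc, if_pos]
          · intro hc; rw [hvdef]; simp only [vseq, ← hbdef, hc, if_neg, not_false_iff]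
      · -- acceptance: pigeonhole on the finitely many bit vectors
        have hinf : {m | q m = qf}.Infinite := by
          apply Set.infinite_of_not_bddAbove
          rintro ⟨ub, hub⟩
          obtain ⟨m, hm, hqm⟩ := hqf (ub + 1)
          exact absurd (hub hqm) (by omega)
        have hex : ∃ b₀ : X → Bool, {m | q m = qf ∧ b m = b₀}.Infinite := by
          by_contra h
          push_neg at h
          have hfin' : {m | q m = qf}.Finite := by
            refine Set.Finite.subset (Set.finite_iUnion h) ?_
            intro m hm
            exact Set.mem_iUnion.2 ⟨b m, hm, rfl⟩
          exact hinf hfin'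
        obtain ⟨b₀, hb₀⟩ := hex
        refine ⟨(qf, b₀), hacc, fun n => ?_⟩
        obtain ⟨m, hm, hlt⟩ := hb₀.exists_gt n
        exact ⟨m, le_of_lt hlt, by simp [hm.1, hm.2]⟩
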